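/- Let V be a finite-dimensional complex vector space with a nondegenerate symmetric bilinear form B, and let H ≤ G be subgroups of GL(V) such that every element g of G satisfies B(g v, g w) = B(v, w) for all v, w ∈ V. Assume that every H-invariant quadratic form Q on V (i.e. Q(h v) = Q(v) for all h ∈ H, v ∈ V) is G-invariant. If W is a subspace of V that is invariant under every element of H and on which the restriction of B is nondegenerate, then W is invariant under every element of G. -/

import Mathlib

open LinearMap (BilinForm)

/-- Lemma "submodules": if `H ≤ G ≤ O(V, B)` have the same invariant quadratic
forms, then any `H`-invariant subspace on which `B` is nondegenerate is
`G`-invariant. -/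
theorem nondegenerate_H_submodule_is_G_submodule
    (V : Type*) [AddCommGroup V] [Module ℂ V] [FiniteDimensional ℂ V]
    (B : BilinForm ℂ V) (hBnd : B.Nondegenerate) (hBsymm : B.IsSymm)
    (H G : Subgroup (V ≃ₗ[ℂ] V)) (hHG : H ≤ G)
    (hGorth : ∀ g ∈ G, ∀ v w : V, B (g v) (g w) = B v w)
    (hinv : ∀ Q : QuadraticForm ℂ V,
      (∀ h ∈ H, ∀ v : V, Q (h v) = Q v) → (∀ g ∈ G, ∀ v : V, Q (g v) = Q v))
    (W : Submodule ℂ V) (hWnd : (B.restrict W).Nondegenerate)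
    (hWH : ∀ h ∈ H, ∀ w ∈ W, h w ∈ W) :
    ∀ g ∈ G, ∀ w ∈ W, g w ∈ W := by
  have hrefl : B.IsRefl := hBsymm.isRefl
  set Wp := B.orthogonal W with hWpdef
  have hcompl : IsCompl W Wp := B.isCompl_orthogonal_of_restrict_nondegenerate hrefl hWnd
  set p : V →ₗ[ℂ] V := W.subtype ∘ₗ Submodule.projectionOnto W Wp hcompl with hpdef
  have hpmem : ∀ v : V, p v ∈ W := fun v => (Submodule.projectionOnto W Wp hcompl v).2
  have hpW : ∀ w ∈ W, p w = w := by
    intro w hw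
    simp [hpdef, Submodule.projectionOnto_apply_left hcompl ⟨w, hw⟩]
  have hpWp : ∀ u ∈ Wp, p u = 0 := by
    intro u hu
    simp [hpdef, Submodule.projectionOnto_apply_right hcompl ⟨u, hu⟩]
  have hdiff : ∀ v : V, v - p v ∈ Wp := by
    intro v
    have := Submodule.projection_add_projection_eq_self hcompl v
    have h2 : (Submodule.projectionOnto Wp W hcompl.symm v : V) = v - p v := by
      rw [eq_sub_iff_add_eq]
      have := Submodule.projection_add_projection_eq_self hcompl.symm v
      simpa [hpdef, add_comm] using this
    rw [← h2]; exact (Submodule.projectionOnto Wp W hcompl.symm v).2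
  have hker : ∀ v : V, p v = 0 ↔ v ∈ Wp := by
    intro v
    constructor
    · intro h; have := hdiff v; rwa [h, sub_zero] at this
    · exact hpWp v
  -- members of Wp are orthogonal to W (both sides)
  have horth : ∀ w ∈ W, ∀ u ∈ Wp, B w u = 0 ∧ B u w = 0 := by
    intro w hw u hu
    have h1 : B w u = 0 := hu w hw
    exact ⟨h1, hrefl _ _ h1⟩
  -- every h ∈ H and g ∈ G... first: H preserves Wp
  have hHWp : ∀ h ∈ H, ∀ u ∈ Wp, h u ∈ Wp := by
    intro h hh u hu w hw
    have hinvmem : h⁻¹ ∈ H := inv_mem hh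
    have : B (h ((h⁻¹ : V ≃ₗ[ℂ] V) w)) (h u) = B ((h⁻¹ : V ≃ₗ[ℂ] V) w) u :=
      hGorth h (hHG hh) _ _
    have happ : h ((h⁻¹ : V ≃ₗ[ℂ] V) w) = w := by
      have h1 : (h * h⁻¹ : V ≃ₗ[ℂ] V) w = w := by rw [mul_inv_cancel]; rfl
      exact h1
    rw [happ] at this
    rw [this]
    exact hu _ (hWH _ hinvmem w hw)
  -- h commutes with p
  have hcomm : ∀ h ∈ H, ∀ v : V, p (h v) = h (p v) := by
    intro h hh v
    have hv : h v = h (p v) + h (v - p v) := by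
      rw [← map_add]; congr 1; abel
    have h1 : h (p v) ∈ W := hWH h hh _ (hpmem v)
    have h2 : h (v - p v) ∈ Wp := hHWp h hh _ (hdiff v)
    have : p (h v) = p (h (p v)) + p (h (v - p v)) := by rw [hv, map_add]
    rw [hpW _ h1, hpWp _ h2, add_zero] at this
    exact this
  -- the quadratic form
  set B' : BilinForm ℂ V := B.compl₁₂ p p with hB'def
  have hB'apply : ∀ v w : V, B' v w = B (p v) (p w) := fun v w => rfl
  set Q : QuadraticForm ℂ V := LinearMap.BilinMap.toQuadraticMap B' with hQdef
  have hQapply : ∀ v : V, Q v = B (p v) (p v) := fun v => rfl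
  have hQH : ∀ h ∈ H, ∀ v : V, Q (h v) = Q v := by
    intro h hh v
    rw [hQapply, hQapply, hcomm h hh, hGorth h (hHG hh)]
  have hQG : ∀ g ∈ G, ∀ v : V, Q (g v) = Q v := hinv Q hQH
  -- G-invariance of B'
  have hB'G : ∀ g ∈ G, ∀ v w : V, B' (g v) (g w) = B' v w := by
    intro g hg v w
    have hpol : QuadraticMap.polar Q (g v) (g w) = QuadraticMap.polar Q v w := by
      unfold QuadraticMap.polar
      rw [← map_add g, hQG g hg, hQG g hg, hQG g hg]
    rw [LinearMap.BilinMap.polar_toQuadraticMap, LinearMap.BilinMap.polar_toQuadraticMap] at hpol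
    have hsymm : ∀ a b : V, B' a b = B' b a := by
      intro a b
      rw [hB'apply, hB'apply]
      exact (hBsymm.eq _ _).symm ▸ by
        simpa using (hBsymm.eq (p a) (p b)).symm
    rw [← hsymm (g v) (g w), ← hsymm v w] at hpol
    have h2 : (2 : ℂ) • B' (g v) (g w) = (2 : ℂ) • B' v w := by
      rw [two_smul, two_smul]; exact hpol
    have := smul_right_injective ℂ (by norm_num : (2:ℂ) ≠ 0) h2
    exact this
  -- G preserves Wp
  have hGWp : ∀ g ∈ G, ∀ u ∈ Wp, g u ∈ Wp := by
    intro g hg u hu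
    rw [← hker]
    -- show p (g u) = 0 : B (p (g u)) is zero on all of W
    have hzero : ∀ w ∈ W, B (p (g u)) w = 0 := by
      intro w hw
      have hginvG : g⁻¹ ∈ G := inv_mem hg
      -- find x with p (g x') hitting w : use x = g⁻¹ applied...
      -- B' (g u) x = B' u (g⁻¹ x) for all x
      have key : ∀ x : V, B' (g u) x = B' u ((g⁻¹ : V ≃ₗ[ℂ] V) x) := by
        intro x
        have := hB'G g hg u ((g⁻¹ : V ≃ₗ[ℂ] V) x)
        have happ : g ((g⁻¹ : V ≃ₗ[ℂ] V) x) = x := by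
          have h1 : (g * g⁻¹ : V ≃ₗ[ℂ] V) x = x := by rw [mul_inv_cancel]; rfl
          exact h1
        rw [happ] at this
        exact this
      have hu0 : p u = 0 := hpWp u hu
      have : B' (g u) w = 0 := by
        rw [key, hB'apply, hu0]
        simp
      rw [hB'apply, hpW w hw] at this
      exact this
    have hmemW : p (g u) ∈ W := hpmem _
    have := hWnd.1 ⟨p (g u), hmemW⟩ (fun ⟨w, hw⟩ => by
      simpa using hzero w hw)
    exact Subtype.mk_eq_mk.1 this
  -- characterization of W and conclusion
  intro g hg w hw
  have hginvG : g⁻¹ ∈ G := inv_mem hg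
  -- show g w ∈ W by showing g w - p (g w) = 0
  have hd : g w - p (g w) ∈ Wp := hdiff _
  have hzero : ∀ y : V, B (g w - p (g w)) y = 0 := by
    intro y
    -- decompose y = p y + (y - p y)
    have hy : y = p y + (y - p y) := by abel
    rw [hy, map_add]
    have h1 : B (g w - p (g w)) (p y) = 0 := hrefl _ _ ((horth _ (hpmem y) _ hd).1)
    have h2 : B (g w - p (g w)) (y - p y) = 0 := by
      have ha : B (p (g w)) (y - p y) = 0 := (horth _ (hpmem _) _ (hdiff y)).1
      have hb : B (g w) (y - p y) = 0 := by
        have hgy : (g⁻¹ : V ≃ₗ[ℂ] V) (y - p y) ∈ Wp := hGWp g⁻¹ hginvG _ (hdiff y)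
        have : B (g w) (g ((g⁻¹ : V ≃ₗ[ℂ] V) (y - p y))) = B w ((g⁻¹ : V ≃ₗ[ℂ] V) (y - p y)) :=
          hGorth g hg _ _
        have happ : g ((g⁻¹ : V ≃ₗ[ℂ] V) (y - p y)) = y - p y := by
          have h1 : (g * g⁻¹ : V ≃ₗ[ℂ] V) (y - p y) = y - p y := by rw [mul_inv_cancel]; rfl
          exact h1
        rw [happ] at this
        rw [this]
        exact (horth w hw _ hgy).1
      rw [LinearMap.BilinForm.sub_left, hb, ha, sub_zero]
    rw [h1, h2, add_zero]
  have : g w - p (g w) = 0 := hBnd.1 _ hzero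
  have : g w = p (g w) := by rwa [sub_eq_zero] at this
  rw [this]
  exact hpmem _
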